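/- Let (V, ω) be a finite-dimensional symplectic vector space over a field of characteristic zero, and let U = T(V)/(R) be the Weyl algebra, where R = span{x⊗y − y⊗x − ω(x,y) : x,y ∈ V}. Then R is of PBW type: the canonical graded surjection Sym(V) → gr(U) from the symmetric algebra to the associated graded of U (with respect to the filtration by tensor degree) is an isomorphism of graded algebras. -/

import Mathlib

/-!
STATEMENT 3: Let `(V, ω)` be a finite-dimensional symplectic vector space over a field of
characteristic zero and `U = T(V)/(R)` the Weyl algebra, where
`R = span{x⊗y − y⊗x − ω(x,y)}`.  Then `R` is of PBW type: the canonical graded surjection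
`Sym(V) → gr(U)` (from the symmetric algebra to the associated graded of `U` for the
filtration by tensor degree) is an isomorphism of graded algebras.

We realise `Sym(V)` and `U` as `RingQuot`s of the tensor algebra; the filtration `F_p` on
`U` is spanned by products of at most `p` generators, and the degree-`p` part of `Sym(V)`
is spanned by products of exactly `p` generators.  The canonical graded map, determined on
generators by `v₁⋯v_p ↦ [v₁⋯v_p]`, is asserted (degreewise) to exist and be bijective;
multiplicativity of the canonical map is automatic from this description on generators.
-/

noncomputable section

variable (𝕂 : Type) [Field 𝕂] [CharZero 𝕂]
variable (V : Type) [AddCommGroup V] [Module 𝕂 V] [FiniteDimensional 𝕂 V]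
variable (ω : V →ₗ[𝕂] V →ₗ[𝕂] 𝕂)

/-- The Weyl relations `x⊗y − y⊗x ~ ω(x,y)`. -/
def weylRel : TensorAlgebra 𝕂 V → TensorAlgebra 𝕂 V → Prop := fun a b =>
  ∃ x y : V, a = TensorAlgebra.ι 𝕂 x * TensorAlgebra.ι 𝕂 y
      - TensorAlgebra.ι 𝕂 y * TensorAlgebra.ι 𝕂 x ∧
    b = algebraMap 𝕂 (TensorAlgebra 𝕂 V) (ω x y)

/-- The Weyl algebra `U = T(V)/(R)`. -/
abbrev Weyl := RingQuot (weylRel 𝕂 V ω)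

/-- The symmetric-algebra relations `x⊗y ~ y⊗x`. -/
def symRel : TensorAlgebra 𝕂 V → TensorAlgebra 𝕂 V → Prop := fun a b =>
  ∃ x y : V, a = TensorAlgebra.ι 𝕂 x * TensorAlgebra.ι 𝕂 y ∧
    b = TensorAlgebra.ι 𝕂 y * TensorAlgebra.ι 𝕂 x

/-- The symmetric algebra `Sym(V) = T(V)/(Q)`. -/
abbrev SymA := RingQuot (symRel 𝕂 V)

/-- Generators of the Weyl algebra. -/
def ιW : V →ₗ[𝕂] Weyl 𝕂 V ω :=
  (RingQuot.mkAlgHom 𝕂 (weylRel 𝕂 V ω)).toLinearMap.comp (TensorAlgebra.ι 𝕂)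

/-- Generators of the symmetric algebra. -/
def ιS : V →ₗ[𝕂] SymA 𝕂 V :=
  (RingQuot.mkAlgHom 𝕂 (symRel 𝕂 V)).toLinearMap.comp (TensorAlgebra.ι 𝕂)

/-- The filtration of `U` by tensor degree: `F_p` is spanned by products of at most `p`
generators. -/
def FW (p : ℕ) : Submodule 𝕂 (Weyl 𝕂 V ω) :=
  Submodule.span 𝕂 {w | ∃ l : List V, l.length ≤ p ∧ w = (l.map (ιW 𝕂 V ω)).prod}

/-- `F_{p-1}` (with `F_{-1} = 0`). -/
def FWprev : ℕ → Submodule 𝕂 (Weyl 𝕂 V ω)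
  | 0 => ⊥
  | (q + 1) => FW 𝕂 V ω q

/-- The `p`-th piece of the associated graded algebra `gr(U) = ⊕ F_p/F_{p-1}`. -/
abbrev GrW (p : ℕ) : Type :=
  @HasQuotient.Quotient _ _ (@Submodule.hasQuotient 𝕂 _ _ (Submodule.addCommGroup (FW 𝕂 V ω p)) _)
    ((FWprev 𝕂 V ω p).comap (FW 𝕂 V ω p).subtype)

/-- The degree-`p` part of `Sym(V)`. -/
def SymGr (p : ℕ) : Submodule 𝕂 (SymA 𝕂 V) :=
  Submodule.span 𝕂 {w | ∃ l : List V, l.length = p ∧ w = (l.map (ιS 𝕂 V)).prod}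

/-! ### Auxiliary development for the proof -/

set_option linter.unusedSectionVars false
set_option maxHeartbeats 1000000

open MvPolynomial

/-- The polynomial model `𝕂[x₁,…,x_n]`. -/
abbrev PP := MvPolynomial (Fin (Module.finrank 𝕂 V)) 𝕂

/-- A fixed basis of `V`. -/
def bV : Module.Basis (Fin (Module.finrank 𝕂 V)) 𝕂 V := Module.finBasis 𝕂 V

/-- The linear inclusion `V → 𝕂[x]` sending `bV i ↦ X i`. -/
def lin : V →ₗ[𝕂] PP 𝕂 V :=
  (Finsupp.linearCombination 𝕂 (X : Fin (Module.finrank 𝕂 V) → PP 𝕂 V)) ∘ₗ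
    ((bV 𝕂 V).repr : V ≃ₗ[𝕂] _).toLinearMap

lemma lin_apply (v : V) :
    lin 𝕂 V v = ((bV 𝕂 V).repr v).sum fun i c => c • (X i : PP 𝕂 V) := by
  simp [lin, Finsupp.linearCombination_apply]

lemma apply_repr {M : Type} [AddCommGroup M] [Module 𝕂 M] (f : V →ₗ[𝕂] M) (v : V) :
    f v = ((bV 𝕂 V).repr v).sum fun i c => c • f (bV 𝕂 V i) := by
  conv_lhs => rw [← (bV 𝕂 V).linearCombination_repr v]
  rw [Finsupp.linearCombination_apply, map_finsuppSum]
  simp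

lemma lin_bV (i : Fin (Module.finrank 𝕂 V)) : lin 𝕂 V (bV 𝕂 V i) = X i := by
  simp [lin]

/-- The derivation `D_v` of `𝕂[x]` with `D_v(X i) = ω(v, bV i)`. -/
def Dv : V →ₗ[𝕂] Derivation 𝕂 (PP 𝕂 V) (PP 𝕂 V) :=
  (mkDerivationEquiv 𝕂).toLinearMap ∘ₗ
    (LinearMap.pi fun i => (Algebra.linearMap 𝕂 (PP 𝕂 V)) ∘ₗ (ω.flip ((bV 𝕂 V) i)))

lemma Dv_def (v : V) :
    Dv 𝕂 V ω v = mkDerivation 𝕂 (fun i => (C (ω v (bV 𝕂 V i)) : PP 𝕂 V)) := by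
  rfl

lemma Dv_X (v : V) (i : Fin (Module.finrank 𝕂 V)) :
    Dv 𝕂 V ω v (X i) = C (ω v (bV 𝕂 V i)) := by
  rw [Dv_def, mkDerivation_X]

lemma Dv_lin (x y : V) : Dv 𝕂 V ω x (lin 𝕂 V y) = C (ω x y) := by
  rw [lin_apply]
  rw [map_finsuppSum]
  rw [apply_repr 𝕂 V (ω x) y, map_finsuppSum]
  refine Finsupp.sum_congr fun i _ => ?_
  rw [Derivation.map_smul, Dv_X]
  simp [Algebra.smul_def]

lemma Dv_C (v : V) (c : 𝕂) : Dv 𝕂 V ω v (C c) = 0 := by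
  rw [show (C c : PP 𝕂 V) = algebraMap 𝕂 (PP 𝕂 V) c from rfl]
  exact Derivation.map_algebraMap _ _

lemma Dcomm (x y : V) (q : PP 𝕂 V) :
    Dv 𝕂 V ω x (Dv 𝕂 V ω y q) = Dv 𝕂 V ω y (Dv 𝕂 V ω x q) := by
  have h : ⁅Dv 𝕂 V ω x, Dv 𝕂 V ω y⁆ = 0 := by
    apply derivation_ext
    intro i
    rw [Derivation.commutator_apply]
    simp [Dv_X, Dv_C]
  have := DFunLike.congr_fun h q
  rw [Derivation.commutator_apply] at this
  simpa [sub_eq_zero] using this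

/-- The operator `L_v = (lin v)·(-) + ½ D_v` on `𝕂[x]`. -/
def Lop : V →ₗ[𝕂] Module.End 𝕂 (PP 𝕂 V) where
  toFun v := (Algebra.lmul 𝕂 (PP 𝕂 V) (lin 𝕂 V v)) +
    (2⁻¹ : 𝕂) • (Dv 𝕂 V ω v : PP 𝕂 V →ₗ[𝕂] PP 𝕂 V)
  map_add' u v := by
    ext q
    simp [add_mul, smul_add, add_smul]
    ring
  map_smul' c v := by
    ext q
    simp [smul_smul, mul_comm, smul_eq_C_mul, mul_assoc, mul_left_comm]

lemma Lop_apply (v : V) (q : PP 𝕂 V) :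
    Lop 𝕂 V ω v q = lin 𝕂 V v * q + (2⁻¹ : 𝕂) • Dv 𝕂 V ω v q := rfl

lemma Lop_rel (hanti : ∀ a c : V, ω c a = -ω a c) (x y : V) :
    Lop 𝕂 V ω x * Lop 𝕂 V ω y - Lop 𝕂 V ω y * Lop 𝕂 V ω x
      = algebraMap 𝕂 (Module.End 𝕂 (PP 𝕂 V)) (ω x y) := by
  refine LinearMap.ext fun q => ?_
  have hc := Dcomm 𝕂 V ω x y q
  simp only [LinearMap.sub_apply, Module.End.mul_apply, Module.algebraMap_end_apply, Lop_apply,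
    mul_add, smul_add, map_add, Derivation.map_smul, Derivation.leibniz, smul_eq_mul, Dv_lin,
    hc, hanti x y, map_neg]
  rw [show ((ω x) y • q : PP 𝕂 V) = (2⁻¹ : 𝕂) • (q * C (ω x y)) + (2⁻¹ : 𝕂) • (q * C (ω x y)) from by
    rw [← smul_add, ← two_smul 𝕂, smul_smul]
    norm_num
    rw [smul_eq_C_mul]
    ring]
  simp only [smul_eq_C_mul]
  ring

/-! ### Degree filtration on polynomials -/

/-- Polynomials of total degree at most `d`. -/
abbrev RTD (d : ℕ) : Submodule 𝕂 (PP 𝕂 V) :=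
  restrictTotalDegree (Fin (Module.finrank 𝕂 V)) 𝕂 d

lemma mem_RTD {q : PP 𝕂 V} {d : ℕ} : q ∈ RTD 𝕂 V d ↔ q.totalDegree ≤ d :=
  mem_restrictTotalDegree _ _ _

lemma RTD_mono {d e : ℕ} (h : d ≤ e) : RTD 𝕂 V d ≤ RTD 𝕂 V e := fun _ hq =>
  (mem_RTD 𝕂 V).mpr (le_trans ((mem_RTD 𝕂 V).mp hq) h)

lemma one_RTD (d : ℕ) : (1 : PP 𝕂 V) ∈ RTD 𝕂 V d := by
  rw [mem_RTD, totalDegree_one]; exact Nat.zero_le _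

lemma mul_RTD {p q : PP 𝕂 V} {d e : ℕ} (hp : p ∈ RTD 𝕂 V d) (hq : q ∈ RTD 𝕂 V e) :
    p * q ∈ RTD 𝕂 V (d + e) :=
  (mem_RTD 𝕂 V).mpr <| le_trans (totalDegree_mul p q) (add_le_add ((mem_RTD 𝕂 V).mp hp) ((mem_RTD 𝕂 V).mp hq))

lemma lin_RTD (v : V) : lin 𝕂 V v ∈ RTD 𝕂 V 1 := by
  rw [lin_apply]
  refine Submodule.finsuppSum_mem _ _ _ _ fun i _ => Submodule.smul_mem _ _ ?_
  rw [mem_RTD, totalDegree_X]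

lemma degree_sub_single {i : Fin (Module.finrank 𝕂 V)} {m : Fin (Module.finrank 𝕂 V) →₀ ℕ}
    (hi : m i ≠ 0) :
    ((m - Finsupp.single i 1).sum fun _ k => k) + 1 = m.sum fun _ k => k := by
  have hle : Finsupp.single i 1 ≤ m := by
    rw [Finsupp.single_le_iff]
    exact Nat.one_le_iff_ne_zero.mpr hi
  have h2 : (m - Finsupp.single i 1) + Finsupp.single i 1 = m := tsub_add_cancel_of_le hle
  calc ((m - Finsupp.single i 1).sum fun _ k => k) + 1
      = ((m - Finsupp.single i 1).sum fun _ k => k) +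
          ((Finsupp.single i 1).sum fun _ k => k) := by
        rw [Finsupp.sum_single_index]; rfl
    _ = m.sum fun _ k => k := by
        rw [← Finsupp.sum_add_index' (fun _ => rfl) (fun _ _ _ => rfl), h2]

lemma Dv_RTD (v : V) {q : PP 𝕂 V} {d k : ℕ} (hq : q ∈ RTD 𝕂 V d) (h : d ≤ k + 1) :
    Dv 𝕂 V ω v q ∈ RTD 𝕂 V k := by
  rw [show Dv 𝕂 V ω v q = Dv 𝕂 V ω v (∑ m ∈ q.support, monomial m (coeff m q)) from by
    rw [← as_sum q]]
  rw [map_sum]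
  refine Submodule.sum_mem _ fun m hm => ?_
  rw [Dv_def, mkDerivation_monomial]
  refine Submodule.smul_mem _ _ (Submodule.finsuppSum_mem _ _ _ _ fun i hi => ?_)
  have hmi : m i ≠ 0 := hi
  rw [smul_eq_mul]
  have h1 : (monomial (m - Finsupp.single i 1) ((m i : 𝕂)) : PP 𝕂 V)
      ∈ RTD 𝕂 V ((m - Finsupp.single i 1).sum fun _ k => k) :=
    (mem_RTD 𝕂 V).mpr (totalDegree_monomial_le _ _)
  have h2 : (C (ω v (bV 𝕂 V i)) : PP 𝕂 V) ∈ RTD 𝕂 V 0 := by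
    rw [mem_RTD, totalDegree_C]
  have h3 := mul_RTD 𝕂 V h1 h2
  rw [add_zero] at h3
  refine RTD_mono 𝕂 V ?_ h3
  have h4 : (m.sum fun _ k => k) ≤ d := le_trans (le_totalDegree hm) ((mem_RTD 𝕂 V).mp hq)
  have h5 := degree_sub_single 𝕂 V (i := i) (m := m) hmi
  omega

lemma Lprod_RTD : ∀ (l : List V) {d : ℕ} {q : PP 𝕂 V}, q ∈ RTD 𝕂 V d →
    ((l.map (Lop 𝕂 V ω)).prod) q ∈ RTD 𝕂 V (d + l.length)
  | [], d, q, hq => by simpa using hq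
  | v :: t, d, q, hq => by
    simp only [List.length_cons]
    rw [List.map_cons, List.prod_cons, Module.End.mul_apply, Lop_apply]
    have hX := Lprod_RTD t hq
    refine Submodule.add_mem _ ?_ (Submodule.smul_mem _ _ ?_)
    · have := mul_RTD 𝕂 V (lin_RTD 𝕂 V v) hX
      refine RTD_mono 𝕂 V (by omega) this
    · exact Dv_RTD 𝕂 V ω v hX (by omega)

lemma Lprod_sub : ∀ (l : List V) {d : ℕ} {q : PP 𝕂 V}, q ∈ RTD 𝕂 V d → ∀ k,
    d + l.length ≤ k + 1 →
    ((l.map (Lop 𝕂 V ω)).prod) q - ((l.map (lin 𝕂 V)).prod) * q ∈ RTD 𝕂 V k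
  | [], d, q, hq, k, hk => by
    simp only [List.map_nil, List.prod_nil, Module.End.one_apply, one_mul, sub_self]
    exact Submodule.zero_mem _
  | v :: t, d, q, hq, k, hk => by
    simp only [List.length_cons] at hk
    rw [List.map_cons, List.prod_cons, Module.End.mul_apply, Lop_apply,
      List.map_cons, List.prod_cons, mul_assoc]
    have hX := Lprod_RTD 𝕂 V ω t hq
    have key : lin 𝕂 V v * ((t.map (Lop 𝕂 V ω)).prod q) -
        lin 𝕂 V v * ((t.map (lin 𝕂 V)).prod * q) ∈ RTD 𝕂 V k := by
      rw [← mul_sub]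
      rcases k with _ | k'
      · obtain rfl : t = [] := List.length_eq_zero_iff.mp (by omega)
        simp only [List.map_nil, List.prod_nil, Module.End.one_apply, one_mul, sub_self,
          mul_zero]
        exact Submodule.zero_mem _
      · have hY := Lprod_sub t hq k' (by omega)
        have := mul_RTD 𝕂 V (lin_RTD 𝕂 V v) hY
        exact RTD_mono 𝕂 V (by omega) this
    have hD : (2⁻¹ : 𝕂) • Dv 𝕂 V ω v ((t.map (Lop 𝕂 V ω)).prod q) ∈ RTD 𝕂 V k :=
      Submodule.smul_mem _ _ (Dv_RTD 𝕂 V ω v hX (by omega))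
    have := Submodule.add_mem _ key hD
    convert this using 1
    ring

lemma prodlin_RTD : ∀ l : List V, ((l.map (lin 𝕂 V)).prod) ∈ RTD 𝕂 V l.length
  | [] => by simpa using one_RTD 𝕂 V 0
  | v :: t => by
    rw [List.map_cons, List.prod_cons, List.length_cons]
    have := mul_RTD 𝕂 V (lin_RTD 𝕂 V v) (prodlin_RTD t)
    exact RTD_mono 𝕂 V (by omega) this

lemma lin_homog (v : V) :
    lin 𝕂 V v ∈ homogeneousSubmodule (Fin (Module.finrank 𝕂 V)) 𝕂 1 := by
  rw [lin_apply]
  refine Submodule.finsuppSum_mem _ _ _ _ fun i _ => Submodule.smul_mem _ _ ?_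
  rw [mem_homogeneousSubmodule]
  exact isHomogeneous_X _ _

lemma prodlin_homog : ∀ l : List V,
    ((l.map (lin 𝕂 V)).prod) ∈ homogeneousSubmodule (Fin (Module.finrank 𝕂 V)) 𝕂 l.length
  | [] => by
    rw [List.map_nil, List.prod_nil, mem_homogeneousSubmodule]
    exact isHomogeneous_one _ _
  | v :: t => by
    rw [List.map_cons, List.prod_cons, mem_homogeneousSubmodule, List.length_cons]
    have h1 := (mem_homogeneousSubmodule _ _).mp (lin_homog 𝕂 V v)
    have h2 := (mem_homogeneousSubmodule _ _).mp (prodlin_homog t)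
    have := h1.mul h2
    rwa [Nat.add_comm] at this

/-! ### Filtration lemmas in the Weyl algebra -/

lemma FW_mono {p q : ℕ} (h : p ≤ q) : FW 𝕂 V ω p ≤ FW 𝕂 V ω q :=
  Submodule.span_mono fun _ ⟨l, hl, hw⟩ => ⟨l, le_trans hl h, hw⟩

lemma prodW_mem (l : List V) : ((l.map (ιW 𝕂 V ω)).prod) ∈ FW 𝕂 V ω l.length :=
  Submodule.subset_span ⟨l, le_rfl, rfl⟩

lemma ιW_mul_FW (v : V) {x : Weyl 𝕂 V ω} {q : ℕ} (hx : x ∈ FW 𝕂 V ω q) :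
    ιW 𝕂 V ω v * x ∈ FW 𝕂 V ω (q + 1) := by
  induction hx using Submodule.span_induction with
  | mem w hw =>
    obtain ⟨l, hl, rfl⟩ := hw
    rw [← List.prod_cons, ← List.map_cons]
    exact Submodule.subset_span ⟨v :: l, by simpa using hl, rfl⟩
  | zero => rw [mul_zero]; exact Submodule.zero_mem _
  | add a b ha hb iha ihb => rw [mul_add]; exact Submodule.add_mem _ iha ihb
  | smul c a ha iha => rw [mul_smul_comm]; exact Submodule.smul_mem _ _ iha

lemma ιW_apply (v : V) :
    ιW 𝕂 V ω v = RingQuot.mkAlgHom 𝕂 (weylRel 𝕂 V ω) (TensorAlgebra.ι 𝕂 v) := rfl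

lemma relW (x y : V) : ιW 𝕂 V ω x * ιW 𝕂 V ω y - ιW 𝕂 V ω y * ιW 𝕂 V ω x
    = algebraMap 𝕂 (Weyl 𝕂 V ω) (ω x y) := by
  have h := RingQuot.mkAlgHom_rel 𝕂
    (show weylRel 𝕂 V ω
        (TensorAlgebra.ι 𝕂 x * TensorAlgebra.ι 𝕂 y - TensorAlgebra.ι 𝕂 y * TensorAlgebra.ι 𝕂 x)
        (algebraMap 𝕂 (TensorAlgebra 𝕂 V) (ω x y)) from ⟨x, y, rfl, rfl⟩)
  rw [map_sub, map_mul, map_mul, AlgHom.commutes] at h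
  rw [ιW_apply, ιW_apply]
  exact h

lemma FWprev_le (n : ℕ) : FWprev 𝕂 V ω n ≤ FW 𝕂 V ω n := by
  cases n with
  | zero => exact bot_le
  | succ q => exact FW_mono 𝕂 V ω (Nat.le_succ q)

lemma ιW_mul_FWprev (v : V) {x : Weyl 𝕂 V ω} {q : ℕ} (hx : x ∈ FWprev 𝕂 V ω q) :
    ιW 𝕂 V ω v * x ∈ FW 𝕂 V ω q := by
  cases q with
  | zero =>
    have : x = 0 := hx
    rw [this, mul_zero]; exact Submodule.zero_mem _
  | succ m => exact ιW_mul_FW 𝕂 V ω v hx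

lemma CL {l₁ l₂ : List V} (h : l₁.Perm l₂) :
    ((l₁.map (ιW 𝕂 V ω)).prod) - ((l₂.map (ιW 𝕂 V ω)).prod) ∈ FWprev 𝕂 V ω l₁.length := by
  induction h with
  | nil => simpa using Submodule.zero_mem _
  | cons v h ih =>
    rename_i t₁ t₂ _
    rw [List.map_cons, List.prod_cons, List.map_cons, List.prod_cons, ← mul_sub]
    exact ιW_mul_FWprev 𝕂 V ω v ih
  | swap x y t =>
    simp only [List.map_cons, List.prod_cons, List.length_cons]
    have : ιW 𝕂 V ω y * (ιW 𝕂 V ω x * ((t.map (ιW 𝕂 V ω)).prod)) -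
        ιW 𝕂 V ω x * (ιW 𝕂 V ω y * ((t.map (ιW 𝕂 V ω)).prod))
        = (ω y x) • ((t.map (ιW 𝕂 V ω)).prod) := by
      rw [← mul_assoc, ← mul_assoc, ← sub_mul, relW, Algebra.smul_def]
    rw [this]
    exact Submodule.smul_mem _ _ (FW_mono 𝕂 V ω (Nat.le_succ _) (prodW_mem 𝕂 V ω t))
  | trans h₁ h₂ ih₁ ih₂ =>
    rw [← h₁.length_eq] at ih₂
    have := Submodule.add_mem _ ih₁ ih₂
    simpa using this

/-! ### Normal ordering map `β : 𝕂[x] → Weyl` -/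

/-- The sorted list of basis vectors corresponding to a monomial exponent. -/
def wlist (m : Fin (Module.finrank 𝕂 V) →₀ ℕ) : List V :=
  (m.toMultiset.sort (· ≤ ·)).map (bV 𝕂 V)

lemma wlist_length (m : Fin (Module.finrank 𝕂 V) →₀ ℕ) :
    (wlist 𝕂 V m).length = m.sum fun _ k => k := by
  rw [wlist, List.length_map, Multiset.length_sort, Finsupp.card_toMultiset]
  rfl

/-- Normally ordered product of generators for a monomial. -/
def wmon (m : Fin (Module.finrank 𝕂 V) →₀ ℕ) : Weyl 𝕂 V ω :=
  (((wlist 𝕂 V m).map (ιW 𝕂 V ω)).prod)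

/-- The normal ordering linear map `β : 𝕂[x] → Weyl`. -/
def βW : PP 𝕂 V →ₗ[𝕂] Weyl 𝕂 V ω :=
  (basisMonomials (Fin (Module.finrank 𝕂 V)) 𝕂).constr 𝕂 (wmon 𝕂 V ω)

lemma βW_monomial (m : Fin (Module.finrank 𝕂 V) →₀ ℕ) :
    βW 𝕂 V ω (monomial m 1) = wmon 𝕂 V ω m := by
  have := (basisMonomials (Fin (Module.finrank 𝕂 V)) 𝕂).constr_basis 𝕂 (wmon 𝕂 V ω) m
  rwa [show (basisMonomials (Fin (Module.finrank 𝕂 V)) 𝕂) m = monomial m 1 from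
    congrFun (coe_basisMonomials _ _) m] at this

lemma wmon_mem (m : Fin (Module.finrank 𝕂 V) →₀ ℕ) :
    wmon 𝕂 V ω m ∈ FW 𝕂 V ω (m.sum fun _ k => k) := by
  rw [← wlist_length 𝕂 V m]
  exact prodW_mem 𝕂 V ω _

lemma βW_RTD {q : PP 𝕂 V} {d : ℕ} (hq : q ∈ RTD 𝕂 V d) : βW 𝕂 V ω q ∈ FW 𝕂 V ω d := by
  rw [show βW 𝕂 V ω q = βW 𝕂 V ω (∑ m ∈ q.support, monomial m (coeff m q)) from by
    rw [← as_sum q]]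
  rw [map_sum]
  refine Submodule.sum_mem _ fun m hm => ?_
  rw [show (monomial m (coeff m q) : PP 𝕂 V) = coeff m q • monomial m 1 from by
    rw [smul_monomial, smul_eq_mul, mul_one]]
  rw [map_smul, βW_monomial]
  refine Submodule.smul_mem _ _ (FW_mono 𝕂 V ω ?_ (wmon_mem 𝕂 V ω m))
  exact le_trans (le_totalDegree hm) ((mem_RTD 𝕂 V).mp hq)

lemma βW_homog {q : PP 𝕂 V} {p : ℕ}
    (hq : q ∈ homogeneousSubmodule (Fin (Module.finrank 𝕂 V)) 𝕂 p) :
    βW 𝕂 V ω q ∈ FW 𝕂 V ω p :=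
  βW_RTD 𝕂 V ω ((mem_RTD 𝕂 V).mpr (((mem_homogeneousSubmodule _ _).mp hq).totalDegree_le))

lemma wlist_perm (i : Fin (Module.finrank 𝕂 V)) (m : Fin (Module.finrank 𝕂 V) →₀ ℕ) :
    (wlist 𝕂 V (m + Finsupp.single i 1)).Perm (bV 𝕂 V i :: wlist 𝕂 V m) := by
  rw [wlist, wlist, ← List.map_cons]
  refine List.Perm.map _ ?_
  rw [← Multiset.coe_eq_coe, Multiset.sort_eq]
  have : ((i :: Multiset.sort m.toMultiset (· ≤ ·) : List (Fin (Module.finrank 𝕂 V)))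
      : Multiset (Fin (Module.finrank 𝕂 V)))
      = i ::ₘ (m.toMultiset.sort (· ≤ ·) : List (Fin (Module.finrank 𝕂 V))) := rfl
  rw [this, Multiset.sort_eq, Finsupp.toMultiset_add, Finsupp.toMultiset_single]
  rw [one_nsmul, add_comm, ← Multiset.singleton_add]

lemma MULm (v : V) (m : Fin (Module.finrank 𝕂 V) →₀ ℕ) :
    βW 𝕂 V ω (lin 𝕂 V v * monomial m 1) - ιW 𝕂 V ω v * βW 𝕂 V ω (monomial m 1)
      ∈ FW 𝕂 V ω (m.sum fun _ k => k) := by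
  have hlin : lin 𝕂 V v * monomial m 1
      = ((bV 𝕂 V).repr v).sum fun i c => c • (monomial (m + Finsupp.single i 1) 1 : PP 𝕂 V) := by
    rw [lin_apply, Finsupp.sum_mul]
    refine Finsupp.sum_congr fun i _ => ?_
    rw [smul_mul_assoc]
    congr 1
    rw [X, monomial_mul, one_mul, add_comm]
  have hιW : ιW 𝕂 V ω v * βW 𝕂 V ω (monomial m 1)
      = ((bV 𝕂 V).repr v).sum fun i c => c • (ιW 𝕂 V ω (bV 𝕂 V i) * wmon 𝕂 V ω m) := by
    rw [βW_monomial, apply_repr 𝕂 V (ιW 𝕂 V ω) v, Finsupp.sum_mul]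
    refine Finsupp.sum_congr fun i _ => ?_
    rw [smul_mul_assoc]
  rw [hlin, hιW, map_finsuppSum, ← Finsupp.sum_sub]
  refine Submodule.finsuppSum_mem _ _ _ _ fun i _ => ?_
  rw [map_smul, βW_monomial]
  have hp := CL 𝕂 V ω (wlist_perm 𝕂 V i m)
  rw [wlist_length] at hp
  have hsum : ((m + Finsupp.single i 1).sum fun _ k => k) = (m.sum fun _ k => k) + 1 := by
    rw [Finsupp.sum_add_index' (fun _ => rfl) (fun _ _ _ => rfl),
      Finsupp.sum_single_index rfl]
  rw [hsum] at hp
  have hd : wmon 𝕂 V ω (m + Finsupp.single i 1) - ιW 𝕂 V ω (bV 𝕂 V i) * wmon 𝕂 V ω m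
      ∈ FW 𝕂 V ω (m.sum fun _ k => k) := by
    simpa [wmon, List.map_cons, List.prod_cons, FWprev] using hp
  have := Submodule.smul_mem (FW 𝕂 V ω (m.sum fun _ k => k)) (((bV 𝕂 V).repr v) i) hd
  simpa [smul_sub] using this

lemma MUL (v : V) {q : PP 𝕂 V} {d : ℕ} (hq : q ∈ RTD 𝕂 V d) :
    βW 𝕂 V ω (lin 𝕂 V v * q) - ιW 𝕂 V ω v * βW 𝕂 V ω q ∈ FW 𝕂 V ω d := by
  rw [show βW 𝕂 V ω (lin 𝕂 V v * q) - ιW 𝕂 V ω v * βW 𝕂 V ω q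
      = βW 𝕂 V ω (lin 𝕂 V v * (∑ m ∈ q.support, monomial m (coeff m q)))
        - ιW 𝕂 V ω v * βW 𝕂 V ω (∑ m ∈ q.support, monomial m (coeff m q)) from by
    rw [← as_sum q]]
  rw [Finset.mul_sum, map_sum, map_sum, Finset.mul_sum, ← Finset.sum_sub_distrib]
  refine Submodule.sum_mem _ fun m hm => ?_
  have hsm : (monomial m (coeff m q) : PP 𝕂 V) = coeff m q • monomial m 1 := by
    rw [smul_monomial, smul_eq_mul, mul_one]
  rw [hsm, mul_smul_comm, map_smul, map_smul, mul_smul_comm]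
  have hmem := FW_mono 𝕂 V ω (le_trans (le_totalDegree hm) ((mem_RTD 𝕂 V).mp hq))
    (MULm 𝕂 V ω v m)
  have := Submodule.smul_mem (FW 𝕂 V ω d) (coeff m q) hmem
  simpa [smul_sub] using this

lemma EXP : ∀ l : List V,
    βW 𝕂 V ω ((l.map (lin 𝕂 V)).prod) - ((l.map (ιW 𝕂 V ω)).prod) ∈ FWprev 𝕂 V ω l.length
  | [] => by
    simp only [List.map_nil, List.prod_nil, List.length_nil]
    have h1 : (1 : PP 𝕂 V) = monomial 0 1 := by rw [monomial_zero', C_1]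
    rw [h1, βW_monomial]
    have h2 : wmon 𝕂 V ω 0 = 1 := by
      rw [wmon, wlist]
      simp [Finsupp.toMultiset_zero, Multiset.sort_zero]
    rw [h2, sub_self]
    exact Submodule.zero_mem _
  | v :: t => by
    rw [List.map_cons, List.prod_cons, List.map_cons, List.prod_cons]
    have key :
        βW 𝕂 V ω (lin 𝕂 V v * (t.map (lin 𝕂 V)).prod) - ιW 𝕂 V ω v * ((t.map (ιW 𝕂 V ω)).prod)
        = (βW 𝕂 V ω (lin 𝕂 V v * (t.map (lin 𝕂 V)).prod)
            - ιW 𝕂 V ω v * βW 𝕂 V ω ((t.map (lin 𝕂 V)).prod))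
          + ιW 𝕂 V ω v * (βW 𝕂 V ω ((t.map (lin 𝕂 V)).prod) - ((t.map (ιW 𝕂 V ω)).prod)) := by
      rw [mul_sub]; abel
    rw [List.length_cons, key]
    show _ ∈ FW 𝕂 V ω t.length
    exact Submodule.add_mem _
      (MUL 𝕂 V ω v (prodlin_RTD 𝕂 V t))
      (ιW_mul_FWprev 𝕂 V ω v (EXP t))



/-! ### The algebra map `e : Sym(V) → 𝕂[x]` -/

/-- The canonical isomorphism-to-be `Sym(V) → 𝕂[x]`. -/
def eS : SymA 𝕂 V →ₐ[𝕂] PP 𝕂 V :=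
  RingQuot.liftAlgHom 𝕂 ⟨TensorAlgebra.lift 𝕂 (lin 𝕂 V), by
    rintro a b ⟨x, y, rfl, rfl⟩
    simp only [map_mul, TensorAlgebra.lift_ι_apply]
    rw [mul_comm]⟩

lemma ιS_apply (v : V) :
    ιS 𝕂 V v = RingQuot.mkAlgHom 𝕂 (symRel 𝕂 V) (TensorAlgebra.ι 𝕂 v) := rfl

lemma eS_ιS (v : V) : eS 𝕂 V (ιS 𝕂 V v) = lin 𝕂 V v := by
  rw [ιS_apply, eS, RingQuot.liftAlgHom_mkAlgHom_apply, TensorAlgebra.lift_ι_apply]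

lemma eS_prod (l : List V) :
    eS 𝕂 V ((l.map (ιS 𝕂 V)).prod) = (l.map (lin 𝕂 V)).prod := by
  rw [map_list_prod, List.map_map]
  congr 1
  refine List.map_congr_left fun v _ => eS_ιS 𝕂 V v

/-- Commutativity of `Sym(V)`. -/
lemma ιS_comm (v : V) (b : SymA 𝕂 V) : ιS 𝕂 V v * b = b * ιS 𝕂 V v := by
  obtain ⟨y, rfl⟩ := RingQuot.mkAlgHom_surjective 𝕂 (symRel 𝕂 V) b
  induction y using TensorAlgebra.induction with
  | algebraMap c => rw [AlgHom.commutes]; exact Algebra.commutes c _ |>.symm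
  | ι w =>
    have h := RingQuot.mkAlgHom_rel 𝕂
      (show symRel 𝕂 V (TensorAlgebra.ι 𝕂 v * TensorAlgebra.ι 𝕂 w)
          (TensorAlgebra.ι 𝕂 w * TensorAlgebra.ι 𝕂 v) from ⟨v, w, rfl, rfl⟩)
    rw [map_mul, map_mul] at h
    exact h
  | mul y1 y2 ih1 ih2 =>
    rw [map_mul, ← mul_assoc, ih1, mul_assoc, ih2, mul_assoc]
  | add y1 y2 ih1 ih2 => rw [map_add, mul_add, add_mul, ih1, ih2]

lemma symA_mul_comm (a b : SymA 𝕂 V) : a * b = b * a := by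
  obtain ⟨y, rfl⟩ := RingQuot.mkAlgHom_surjective 𝕂 (symRel 𝕂 V) a
  induction y using TensorAlgebra.induction with
  | algebraMap c => rw [AlgHom.commutes]; exact Algebra.commutes c _
  | ι w => exact ιS_comm 𝕂 V w b
  | mul y1 y2 ih1 ih2 =>
    rw [map_mul, mul_assoc, ih2, ← mul_assoc, ih1, mul_assoc]
  | add y1 y2 ih1 ih2 => rw [map_add, add_mul, mul_add, ih1, ih2]

noncomputable instance : CommRing (SymA 𝕂 V) :=
  { (inferInstance : Ring (SymA 𝕂 V)) with mul_comm := symA_mul_comm 𝕂 V }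

/-- Retraction `𝕂[x] → Sym(V)`. -/
def gS : PP 𝕂 V →ₐ[𝕂] SymA 𝕂 V := aeval (fun i => ιS 𝕂 V (bV 𝕂 V i))

lemma gS_lin (v : V) : gS 𝕂 V (lin 𝕂 V v) = ιS 𝕂 V v := by
  rw [lin_apply, map_finsuppSum, apply_repr 𝕂 V (ιS 𝕂 V) v]
  refine Finsupp.sum_congr fun i _ => ?_
  rw [map_smul, gS, aeval_X]

lemma gS_eS (a : SymA 𝕂 V) : gS 𝕂 V (eS 𝕂 V a) = a := by
  have h : (gS 𝕂 V).comp (eS 𝕂 V) = AlgHom.id 𝕂 (SymA 𝕂 V) := by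
    refine RingQuot.ringQuot_ext' 𝕂 _ _ ?_
    refine TensorAlgebra.hom_ext ?_
    refine LinearMap.ext fun v => ?_
    simp only [LinearMap.coe_comp, Function.comp_apply, AlgHom.toLinearMap_apply,
      AlgHom.coe_comp, AlgHom.coe_id, id_eq]
    rw [← ιS_apply 𝕂 V v, eS_ιS, gS_lin]
  exact DFunLike.congr_fun h a

lemma eS_inj : Function.Injective (eS 𝕂 V) := by
  intro a b h
  rw [← gS_eS 𝕂 V a, ← gS_eS 𝕂 V b, h]

lemma eS_SymGr {p : ℕ} {s : SymA 𝕂 V} (hs : s ∈ SymGr 𝕂 V p) :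
    eS 𝕂 V s ∈ homogeneousSubmodule (Fin (Module.finrank 𝕂 V)) 𝕂 p := by
  induction hs using Submodule.span_induction with
  | mem w hw =>
    obtain ⟨l, hl, rfl⟩ := hw
    rw [eS_prod, ← hl]
    exact prodlin_homog 𝕂 V l
  | zero => rw [map_zero]; exact Submodule.zero_mem _
  | add a b ha hb iha ihb => rw [map_add]; exact Submodule.add_mem _ iha ihb
  | smul c a ha iha => rw [map_smul]; exact Submodule.smul_mem _ _ iha

/-! ### The representation of the Weyl algebra on `𝕂[x]` -/

/-- The Fock representation `Weyl → End(𝕂[x])`. -/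
def rho (hanti : ∀ a c : V, ω c a = -ω a c) : Weyl 𝕂 V ω →ₐ[𝕂] Module.End 𝕂 (PP 𝕂 V) :=
  RingQuot.liftAlgHom 𝕂 ⟨TensorAlgebra.lift 𝕂 (Lop 𝕂 V ω), by
    rintro a b ⟨x, y, rfl, rfl⟩
    simp only [map_sub, map_mul, TensorAlgebra.lift_ι_apply, AlgHom.commutes]
    exact Lop_rel 𝕂 V ω hanti x y⟩

lemma rho_ιW (hanti : ∀ a c : V, ω c a = -ω a c) (v : V) :
    rho 𝕂 V ω hanti (ιW 𝕂 V ω v) = Lop 𝕂 V ω v := by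
  rw [ιW_apply, rho, RingQuot.liftAlgHom_mkAlgHom_apply, TensorAlgebra.lift_ι_apply]

/-- The symbol map `σ : Weyl → 𝕂[x]`, `σ(u) = ρ(u)(1)`. -/
def sig (hanti : ∀ a c : V, ω c a = -ω a c) : Weyl 𝕂 V ω →ₗ[𝕂] PP 𝕂 V where
  toFun u := rho 𝕂 V ω hanti u 1
  map_add' a b := by simp only [map_add, LinearMap.add_apply]
  map_smul' c a := by simp only [map_smul, LinearMap.smul_apply, RingHom.id_apply]

lemma sig_prod (hanti : ∀ a c : V, ω c a = -ω a c) (l : List V) :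
    sig 𝕂 V ω hanti ((l.map (ιW 𝕂 V ω)).prod) = ((l.map (Lop 𝕂 V ω)).prod) 1 := by
  show rho 𝕂 V ω hanti ((l.map (ιW 𝕂 V ω)).prod) 1 = _
  rw [map_list_prod, List.map_map]
  congr 2
  refine List.map_congr_left fun v _ => rho_ιW 𝕂 V ω hanti v

lemma sig_FW (hanti : ∀ a c : V, ω c a = -ω a c) {u : Weyl 𝕂 V ω} {p : ℕ}
    (hu : u ∈ FW 𝕂 V ω p) : sig 𝕂 V ω hanti u ∈ RTD 𝕂 V p := by
  induction hu using Submodule.span_induction with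
  | mem w hw =>
    obtain ⟨l, hl, rfl⟩ := hw
    rw [sig_prod]
    have := Lprod_RTD 𝕂 V ω l (one_RTD 𝕂 V 0)
    rw [Nat.zero_add] at this
    exact RTD_mono 𝕂 V hl this
  | zero => rw [map_zero]; exact Submodule.zero_mem _
  | add a b ha hb iha ihb => rw [map_add]; exact Submodule.add_mem _ iha ihb
  | smul c a ha iha => rw [map_smul]; exact Submodule.smul_mem _ _ iha

lemma sig_top (hanti : ∀ a c : V, ω c a = -ω a c) {l : List V} {p : ℕ} (hl : l.length = p) :
    homogeneousComponent p (sig 𝕂 V ω hanti ((l.map (ιW 𝕂 V ω)).prod))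
      = (l.map (lin 𝕂 V)).prod := by
  rw [sig_prod]
  have hsub := Lprod_sub 𝕂 V ω l (one_RTD 𝕂 V 0) (p - 1) (by omega)
  rw [mul_one] at hsub
  have hdec : ((l.map (Lop 𝕂 V ω)).prod) 1
      = (l.map (lin 𝕂 V)).prod + (((l.map (Lop 𝕂 V ω)).prod) 1 - (l.map (lin 𝕂 V)).prod) := by
    ring
  rw [hdec, map_add, homogeneousComponent_of_mem (hl ▸ prodlin_homog 𝕂 V l), if_pos rfl]
  rcases p with _ | p'
  · obtain rfl : l = [] := List.length_eq_zero_iff.mp hl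
    simp only [List.map_nil, List.prod_nil, Module.End.one_apply, sub_self, map_zero, add_zero]
  · rw [homogeneousComponent_eq_zero, add_zero]
    have := (mem_RTD 𝕂 V).mp hsub
    omega

theorem stmt3 (halt : ∀ x, ω x x = 0) (hnondeg : ∀ x, (∀ y, ω x y = 0) → x = 0) :
    ∀ p : ℕ, ∃ φ : ↥(SymGr 𝕂 V p) →ₗ[𝕂] GrW 𝕂 V ω p,
      (∀ (l : List V) (hl : l.length = p),
        φ ⟨(l.map (ιS 𝕂 V)).prod, Submodule.subset_span ⟨l, hl, rfl⟩⟩ =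
          Submodule.Quotient.mk
            ⟨(l.map (ιW 𝕂 V ω)).prod, Submodule.subset_span ⟨l, hl.le, rfl⟩⟩) ∧
      Function.Bijective φ := by
  intro p
  have hanti : ∀ a c : V, ω c a = -ω a c := by
    intro a c
    have h := halt (a + c)
    simp only [map_add, LinearMap.add_apply, halt a, halt c, add_zero, zero_add] at h
    linear_combination h
  set N := (FWprev 𝕂 V ω p).comap (FW 𝕂 V ω p).subtype with hN
  -- construction of φ
  let f1 : ↥(SymGr 𝕂 V p) →ₗ[𝕂] ↥(FW 𝕂 V ω p) :=
    LinearMap.codRestrict (FW 𝕂 V ω p)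
      ((βW 𝕂 V ω) ∘ₗ (eS 𝕂 V).toLinearMap ∘ₗ (SymGr 𝕂 V p).subtype)
      (fun s => βW_homog 𝕂 V ω (eS_SymGr 𝕂 V s.2))
  let φ : ↥(SymGr 𝕂 V p) →ₗ[𝕂] GrW 𝕂 V ω p :=
    (@Submodule.mkQ _ _ _ (Submodule.addCommGroup _) _ N).comp f1
  -- the formula for φ on generators (with arbitrary membership proofs)
  have hform : ∀ (l : List V) (hl : l.length = p)
      (h1 : (l.map (ιS 𝕂 V)).prod ∈ SymGr 𝕂 V p)
      (h2 : (l.map (ιW 𝕂 V ω)).prod ∈ FW 𝕂 V ω p),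
      φ ⟨(l.map (ιS 𝕂 V)).prod, h1⟩ = Submodule.Quotient.mk ⟨(l.map (ιW 𝕂 V ω)).prod, h2⟩ := by
    intro l hl h1 h2
    show Submodule.Quotient.mk (f1 ⟨(l.map (ιS 𝕂 V)).prod, h1⟩) = _
    rw [Submodule.Quotient.eq]
    show f1 ⟨(l.map (ιS 𝕂 V)).prod, h1⟩ - ⟨(l.map (ιW 𝕂 V ω)).prod, h2⟩ ∈ N
    show βW 𝕂 V ω (eS 𝕂 V ((l.map (ιS 𝕂 V)).prod)) - (l.map (ιW 𝕂 V ω)).prod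
      ∈ FWprev 𝕂 V ω p
    rw [eS_prod]
    have := EXP 𝕂 V ω l
    rwa [hl] at this
  -- the inverse-direction map ψ
  have hker : N ≤ LinearMap.ker
      ((homogeneousComponent p) ∘ₗ (sig 𝕂 V ω hanti) ∘ₗ (FW 𝕂 V ω p).subtype) := by
    rintro ⟨u, hu⟩ hmem
    have hmem' : u ∈ FWprev 𝕂 V ω p := hmem
    rw [LinearMap.mem_ker]
    show homogeneousComponent p (sig 𝕂 V ω hanti u) = 0
    cases p with
    | zero =>
      have h0 : u = 0 := (Submodule.mem_bot 𝕂).mp hmem'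
      rw [h0, map_zero, map_zero]
    | succ q =>
      have h1 := sig_FW 𝕂 V ω hanti (hmem' : u ∈ FW 𝕂 V ω q)
      refine homogeneousComponent_eq_zero _ _ ?_
      have := (mem_RTD 𝕂 V).mp h1
      omega
  let ψ : GrW 𝕂 V ω p →ₗ[𝕂] PP 𝕂 V :=
    @Submodule.liftQ _ _ _ (Submodule.addCommGroup _) _ N _ _ _ _ _ _ _ hker
  have hψmk : ∀ (x : Weyl 𝕂 V ω) (hx : x ∈ FW 𝕂 V ω p),
      ψ (Submodule.Quotient.mk ⟨x, hx⟩) = homogeneousComponent p (sig 𝕂 V ω hanti x) := by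
    intro x hx
    rfl
  -- ψ ∘ φ agrees with eS on SymGr p
  have hψφ : ∀ (x : SymA 𝕂 V) (hx : x ∈ SymGr 𝕂 V p), ψ (φ ⟨x, hx⟩) = eS 𝕂 V x := by
    intro x hx
    induction hx using Submodule.span_induction with
    | mem w hw =>
      obtain ⟨l, hl, rfl⟩ := hw
      generalize_proofs h1
      rw [hform l hl _ (FW_mono 𝕂 V ω hl.le (prodW_mem 𝕂 V ω l)), hψmk, sig_top 𝕂 V ω hanti hl,
        eS_prod]
    | zero =>
      have h0 : (⟨0, Submodule.zero_mem _⟩ : ↥(SymGr 𝕂 V p)) = 0 := rfl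
      rw [h0, map_zero, map_zero, map_zero]
    | add a b ha hb iha ihb =>
      have h0 : (⟨a + b, Submodule.add_mem _ ha hb⟩ : ↥(SymGr 𝕂 V p))
          = ⟨a, ha⟩ + ⟨b, hb⟩ := rfl
      rw [h0, map_add, map_add, iha, ihb, map_add]
    | smul c a ha iha =>
      have h0 : (⟨c • a, Submodule.smul_mem _ c ha⟩ : ↥(SymGr 𝕂 V p))
          = c • (⟨a, ha⟩ : ↥(SymGr 𝕂 V p)) := rfl
      rw [h0, map_smul, map_smul, iha, map_smul]
  refine ⟨φ, fun l hl => hform l hl _ _, ?_, ?_⟩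
  · -- injectivity
    intro s t h
    have h2 : eS 𝕂 V (s : SymA 𝕂 V) = eS 𝕂 V (t : SymA 𝕂 V) := by
      rw [← hψφ s.1 s.2, ← hψφ t.1 t.2]
      exact congrArg ψ h
    exact Subtype.ext (eS_inj 𝕂 V h2)
  · -- surjectivity
    intro g
    obtain ⟨⟨u, hu⟩, rfl⟩ :=
      @Submodule.Quotient.mk_surjective _ _ _ (Submodule.addCommGroup _) _ N g
    have claim : ∀ (x : Weyl 𝕂 V ω) (hx : x ∈ FW 𝕂 V ω p),
        Submodule.Quotient.mk (⟨x, hx⟩ : ↥(FW 𝕂 V ω p)) ∈ LinearMap.range φ := by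
      intro x hx
      induction hx using Submodule.span_induction with
      | mem w hw =>
        obtain ⟨l, hl, rfl⟩ := hw
        rcases eq_or_lt_of_le hl with heq | hlt
        · exact ⟨⟨(l.map (ιS 𝕂 V)).prod, Submodule.subset_span ⟨l, heq, rfl⟩⟩,
            hform l heq _ _⟩
        · have hz : Submodule.Quotient.mk
              (⟨(l.map (ιW 𝕂 V ω)).prod, Submodule.subset_span ⟨l, hl, rfl⟩⟩ :
                ↥(FW 𝕂 V ω p)) = (0 : GrW 𝕂 V ω p) := by
            rw [Submodule.Quotient.mk_eq_zero]
            show (l.map (ιW 𝕂 V ω)).prod ∈ FWprev 𝕂 V ω p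
            cases p with
            | zero => omega
            | succ q =>
              exact FW_mono 𝕂 V ω (by omega) (prodW_mem 𝕂 V ω l)
          rw [hz]
          exact Submodule.zero_mem _
      | zero =>
        have h0 : (⟨0, Submodule.zero_mem _⟩ : ↥(FW 𝕂 V ω p)) = 0 := rfl
        rw [h0, Submodule.Quotient.mk_zero]
        exact Submodule.zero_mem _
      | add a b ha hb iha ihb =>
        have h0 : (⟨a + b, Submodule.add_mem _ ha hb⟩ : ↥(FW 𝕂 V ω p))
            = ⟨a, ha⟩ + ⟨b, hb⟩ := rfl
        rw [h0, Submodule.Quotient.mk_add]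
        exact Submodule.add_mem _ iha ihb
      | smul c a ha iha =>
        have h0 : (⟨c • a, Submodule.smul_mem _ c ha⟩ : ↥(FW 𝕂 V ω p))
            = c • (⟨a, ha⟩ : ↥(FW 𝕂 V ω p)) := rfl
        rw [h0, Submodule.Quotient.mk_smul]
        exact Submodule.smul_mem _ _ iha
    exact claim u hu
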